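/- Let G be a countable abelian group which is semiprojective in the category of countable abelian groups: for every inductive sequence H₁ → H₂ → ⋯ of countable abelian groups with colimit H, the natural map colim Hom(G, Hₙ) → Hom(G, H) is surjective. Then G is finitely generated. -/

import Mathlib

/-- The composite `H n →+ H (n + k)` of the structural maps of an inductive sequence. -/
def transMap {H : ℕ → Type} [∀ n, AddCommGroup (H n)] (f : ∀ n, H n →+ H (n + 1)) (n : ℕ) :
    ∀ k : ℕ, H n →+ H (n + k)
  | 0 => AddMonoidHom.id (H n)
  | k + 1 => (f (n + k)).comp (transMap f n k)

/-- If a countable abelian group `G` is semiprojective in the category of countable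
abelian groups (for every inductive sequence `H₁ → H₂ → ⋯` of countable abelian groups
with colimit `L`, the natural map `colim Hom(G, Hₙ) → Hom(G, L)` is surjective),
then `G` is finitely generated. The colimit `L` is characterized by: compatible maps
`ι n : Hₙ → L`, joint surjectivity, and the condition that an element vanishing in `L`
vanishes at some finite stage. -/
theorem stmt10 {G : Type} [AddCommGroup G] [Countable G]
    (hsp : ∀ (H : ℕ → Type) [∀ n, AddCommGroup (H n)] [∀ n, Countable (H n)]
      (f : ∀ n, H n →+ H (n + 1)) (L : Type) [AddCommGroup L] [Countable L]
      (ι : ∀ n, H n →+ L),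
      (∀ n, (ι (n + 1)).comp (f n) = ι n) →
      (∀ x : L, ∃ n y, ι n y = x) →
      (∀ n x, ι n x = 0 → ∃ k, transMap f n k x = 0) →
      ∀ φ : G →+ L, ∃ n, ∃ ψ : G →+ H n, (ι n).comp ψ = φ) :
    AddGroup.FG G := by
  obtain ⟨g, hg⟩ := exists_surjective_nat G
  set S : ℕ → AddSubgroup G := fun n => AddSubgroup.closure (g '' Set.Iio n) with hS
  have hmono : ∀ n, S n ≤ S (n + 1) := fun n =>
    AddSubgroup.closure_mono (Set.image_mono (fun x hx => lt_trans hx (Nat.lt_succ_self n)))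
  obtain ⟨n, ψ, hψ⟩ := hsp (fun n => ↥(S n))
    (fun n => AddSubgroup.inclusion (hmono n)) G (fun n => (S n).subtype)
    (fun n => by ext x; rfl)
    (by
      intro x
      obtain ⟨m, rfl⟩ := hg x
      exact ⟨m + 1, ⟨g m, AddSubgroup.subset_closure ⟨m, Nat.lt_succ_self m, rfl⟩⟩, rfl⟩)
    (by
      intro n x hx
      exact ⟨0, Subtype.ext hx⟩)
    (AddMonoidHom.id G)
  have hsurj : Function.Surjective ((S n).subtype.comp ψ) := by
    rw [hψ]; exact Function.surjective_id
  have htop : S n = ⊤ := by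
    rw [eq_top_iff]
    intro x _
    obtain ⟨y, hy⟩ := hsurj x
    exact hy ▸ (ψ y).2
  rw [AddGroup.fg_iff]
  exact ⟨g '' Set.Iio n, htop ▸ rfl, Set.Finite.image _ (Set.finite_Iio n)⟩
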